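/- Fix an integer m ≥ 0 and let (u_j) be defined by u_0 = 0, u_1 = 1, u_{j+1} = (2m+1) u_j + u_{j-1} for j ≥ 1 (so u_{3k-1} is odd for every k ≥ 1). Then for all integers k ≥ 1 and n ≥ 1, setting a = u_{3k-1} n − (u_{3k-1} − (2m+1))/2, the simple continued fraction expansion of √(a² + 2 u_{3k-2} n − u_{3k-2} + 1) is [a; \overline{(2m+1) repeated (3k−2) times, 2a}]; that is, the period of length 3k−1 consists of the quotient 2m+1 repeated 3k−2 times followed by 2a. -/

import Mathlib

/-- One step of the continued fraction algorithm for `√N`, expressed through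
integer data `(MM, Q) → (MM', Q')` with partial quotient `bb`. -/
private lemma cf_step (NI MM Q MM' Q' bb : ℤ)
    (hQ : 0 < Q) (hQ' : 0 < Q') (hM' : 0 ≤ MM')
    (hrel : MM' = 2 * bb * Q - MM) (hqq : 4 * (Q * Q') = 4 * NI - MM' ^ 2)
    (hb : Q' < Q + MM') :
    ((bb : ℝ) < (Real.sqrt NI + MM / 2) / Q ∧ (Real.sqrt NI + MM / 2) / Q < bb + 1)
      ∧ ((Real.sqrt NI + MM / 2) / Q - bb)⁻¹ = (Real.sqrt NI + MM' / 2) / Q' := by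
  have hN : (0 : ℤ) < NI := by nlinarith
  have hx2 : Real.sqrt NI ^ 2 = (NI : ℝ) := Real.sq_sqrt (by exact_mod_cast hN.le)
  set x := Real.sqrt (NI : ℝ) with hx
  have hQR : (0 : ℝ) < (Q : ℝ) := by exact_mod_cast hQ
  have hQ'R : (0 : ℝ) < (Q' : ℝ) := by exact_mod_cast hQ'
  have hMR : (0 : ℝ) ≤ (MM' : ℝ) := by exact_mod_cast hM'
  have hqqR : 4 * ((Q : ℝ) * Q') = 4 * (NI : ℝ) - (MM' : ℝ) ^ 2 := by exact_mod_cast hqq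
  have hrelR : (MM' : ℝ) = 2 * bb * Q - MM := by exact_mod_cast hrel
  have hbR : (Q' : ℝ) < Q + MM' := by exact_mod_cast hb
  have hlow : (MM' : ℝ) / 2 < x := by
    rw [hx]
    rw [Real.lt_sqrt (by linarith)]
    nlinarith
  have hupp : x < (MM' : ℝ) / 2 + Q := by
    rw [hx]
    rw [Real.sqrt_lt' (by linarith)]
    nlinarith
  have hXeq : (x + (MM : ℝ) / 2) / Q - bb = (x - (MM' : ℝ) / 2) / Q := by
    rw [div_sub' (ne_of_gt hQR), div_eq_div_iff (ne_of_gt hQR) (ne_of_gt hQR)]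
    linear_combination ((Q : ℝ) / 2) * hrelR
  refine ⟨⟨?_, ?_⟩, ?_⟩
  · rw [lt_div_iff₀ hQR]; linarith
  · rw [div_lt_iff₀ hQR]; nlinarith
  · rw [hXeq, inv_div, div_eq_div_iff ((by linarith : (0:ℝ) < x - (MM' : ℝ)/2)).ne' (ne_of_gt hQ'R)]
    linear_combination (1/4) * hqqR - hx2

/-- If a sequence `X` is an orbit of the Gauss map with integer parts strictly
between, then the partial denominators of `GenContFract.of (X 0)` are given by `b`. -/
private lemma orbit_s_get :
    ∀ (i : ℕ) (X : ℕ → ℝ) (b : ℕ → ℤ),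
      (∀ j, ((b j : ℝ) < X j ∧ X j < b j + 1)) →
      (∀ j, X (j + 1) = (X j - b j)⁻¹) →
      (GenContFract.of (X 0)).s.get? i = some ⟨1, (b (i + 1) : ℝ)⟩ := by
  intro i
  induction i with
  | zero =>
    intro X b hfl hstep
    have hfloor0 : ⌊X 0⌋ = b 0 := Int.floor_eq_iff.mpr ⟨(hfl 0).1.le, (hfl 0).2⟩
    have hfr : Int.fract (X 0) = X 0 - b 0 := by rw [Int.fract, hfloor0]
    have hne : Int.fract (X 0) ≠ 0 := by
      rw [hfr]; exact sub_ne_zero.mpr (ne_of_gt (hfl 0).1)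
    have hh := GenContFract.of_s_head hne
    have hinv : (Int.fract (X 0))⁻¹ = X 1 := by rw [hfr, ← hstep 0]
    have hfloor1 : ⌊(Int.fract (X 0))⁻¹⌋ = b 1 := by
      rw [hinv]; exact Int.floor_eq_iff.mpr ⟨(hfl 1).1.le, (hfl 1).2⟩
    show (GenContFract.of (X 0)).s.head = _
    rw [hh, hfloor1]
  | succ p ih =>
    intro X b hfl hstep
    rw [GenContFract.of_s_succ]
    have hfloor0 : ⌊X 0⌋ = b 0 := Int.floor_eq_iff.mpr ⟨(hfl 0).1.le, (hfl 0).2⟩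
    have hfr : Int.fract (X 0) = X 0 - b 0 := by rw [Int.fract, hfloor0]
    have hinv : (Int.fract (X 0))⁻¹ = X 1 := by rw [hfr, ← hstep 0]
    rw [hinv]
    have := ih (fun j => X (j + 1)) (fun j => b (j + 1))
      (fun j => hfl (j + 1)) (fun j => hstep (j + 1))
    simpa using this

private lemma getD_rep_append {α : Type*} (L j : ℕ) (x y d : α) (hj : j ≤ L) :
    (List.replicate L x ++ [y]).getD j d = if j < L then x else y := by
  rcases lt_or_eq_of_le hj with h | h
  · rw [if_pos h, List.getD_append _ _ _ _ (by simpa using h),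
      List.getD_eq_getElem _ _ (by simpa using h), List.getElem_replicate]
  · subst h
    rw [if_neg (lt_irrefl _), List.getD_append_right _ _ _ _ (by simp)]
    simp

set_option maxHeartbeats 1600000 in
theorem cf_odd_quotient_repeated_three_k_sub_two
    (m : ℤ) (hm : 0 ≤ m)
    (u : ℕ → ℤ)
    (hu0 : u 0 = 0) (hu1 : u 1 = 1)
    (hu : ∀ j : ℕ, 1 ≤ j → u (j + 1) = (2 * m + 1) * u j + u (j - 1))
    (k : ℕ) (hk : 1 ≤ k) (n : ℤ) (hn : 1 ≤ n)
    (a : ℤ) (ha : 2 * a = 2 * (u (3 * k - 1) * n) - (u (3 * k - 1) - (2 * m + 1))) :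
    ⌊Real.sqrt ((a ^ 2 + 2 * u (3 * k - 2) * n - u (3 * k - 2) + 1 : ℤ) : ℝ)⌋ = a ∧
    ∀ i : ℕ,
      (GenContFract.of
          (Real.sqrt ((a ^ 2 + 2 * u (3 * k - 2) * n
            - u (3 * k - 2) + 1 : ℤ) : ℝ))).partDens.get? i
        = some (((List.replicate (3 * k - 2) (2 * m + 1) ++ [2 * a]).getD
            (i % (3 * k - 1)) 0 : ℝ)) := by
  obtain ⟨K, rfl⟩ : ∃ K, k = K + 1 := ⟨k - 1, by omega⟩
  simp only [show 3 * (K + 1) - 1 = 3 * K + 2 from by omega,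
    show 3 * (K + 1) - 2 = 3 * K + 1 from by omega] at ha ⊢
  set c : ℤ := 2 * m + 1 with hc
  have hc1 : 1 ≤ c := by omega
  set s : ℤ := 2 * n - 1 with hs_def
  have hs1 : 1 ≤ s := by omega
  have hs0 : 0 ≤ s := by omega
  set l1 : ℕ := 3 * K + 1 with hl1
  set l2 : ℕ := 3 * K + 2 with hl2
  set NN : ℤ := a ^ 2 + 2 * u l1 * n - u l1 + 1 with hNN
  -- basic recurrence
  have hu' : ∀ j : ℕ, u (j + 2) = c * u (j + 1) + u j := by
    intro j
    have := hu (j + 1) (by omega)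
    simpa using this
  -- nonnegativity and monotonicity
  have key : ∀ j, 0 ≤ u j ∧ 0 ≤ u (j + 1) ∧ u j ≤ u (j + 1) := by
    intro j
    induction j with
    | zero => refine ⟨by simp [hu0], by simp [hu1], by simp [hu0, hu1]⟩
    | succ p ih =>
      refine ⟨ih.2.1, ?_, ?_⟩
      · rw [hu' p]; nlinarith [ih.1, ih.2.1]
      · rw [hu' p]; nlinarith [ih.1, ih.2.1]
  have hnn : ∀ j, 0 ≤ u j := fun j => (key j).1
  have hmono : ∀ j, u j ≤ u (j + 1) := fun j => (key j).2.2
  -- addition formula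
  have haddf : ∀ p q, u (p + q + 1) = u (p + 1) * u (q + 1) + u p * u q := by
    have H : ∀ p, (∀ q, u (p + q + 1) = u (p + 1) * u (q + 1) + u p * u q) ∧
        (∀ q, u (p + q + 2) = u (p + 2) * u (q + 1) + u (p + 1) * u q) := by
      intro p
      induction p with
      | zero =>
        constructor
        · intro q; simp [hu0, hu1]
        · intro q
          have h2 : u 2 = c := by
            have := hu' 0; rw [this, hu0, hu1]; ring
          have e : 0 + q + 2 = q + 2 := by omega
          rw [e, hu' q, h2, hu1]; ring
      | succ p ih =>
        constructor
        · intro q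
          have e : p + 1 + q + 1 = p + q + 2 := by omega
          rw [e]; exact ih.2 q
        · intro q
          have e : p + 1 + q + 2 = (p + q + 1) + 2 := by omega
          rw [e, hu' (p + q + 1)]
          have e2 : p + q + 1 + 1 = p + q + 2 := by omega
          rw [e2, ih.2 q, ih.1 q, hu' (p + 1), hu' p]
          ring
    exact fun p q => (H p).1 q
  have h2a : 2 * a = s * u l2 + c := by rw [hs_def, hc]; linarith [ha]
  -- definitions of the orbit data
  set Qf : ℕ → ℤ := fun t => s * (u t * u (l2 - t)) + 1 with hQf
  set Mf : ℕ → ℤ := fun t => s * (u t * u (l2 - t + 1) - u (t - 1) * u (l2 - t)) + c with hMf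
  have hQpos : ∀ t, 0 < Qf t := by
    intro t
    have h1 : 0 ≤ s * (u t * u (l2 - t)) :=
      mul_nonneg hs0 (mul_nonneg (hnn t) (hnn (l2 - t)))
    simp only [hQf]; linarith
  have h4N : 4 * NN = (s * u l2 + c) ^ 2 + 4 * (s * u l1 + 1) := by
    rw [hNN]
    linear_combination (2 * a + s * u l2 + c) * h2a + (-4 * u l1) * hs_def
  -- data at t = 1
  have eQ1 : Qf 1 = s * u l1 + 1 := by
    simp only [hQf, show l2 - 1 = l1 from by omega, hu1]; ring
  have eM1 : Mf 1 = 2 * a := by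
    simp only [hMf, show l2 - 1 + 1 = l2 from by omega, show (1:ℕ) - 1 = 0 from rfl,
      show l2 - 1 = l1 from by omega, hu0, hu1]
    linear_combination -h2a
  have eQl2 : Qf l2 = 1 := by
    simp only [hQf, Nat.sub_self, hu0]; ring
  have eMl2 : Mf l2 = 2 * a := by
    simp only [hMf, Nat.sub_self, hu0, show (0:ℕ) + 1 = 1 from rfl, hu1,
      show l2 - 1 = l1 from by omega]
    linear_combination -h2a
  have hqq0 : 4 * (Qf 0 * Qf 1) = 4 * NN - Mf 1 ^ 2 := by
    have eQ0 : Qf 0 = 1 := by simp only [hQf, hu0]; ring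
    rw [eQ0, eQ1, eM1, h4N]
    linear_combination (2 * a + s * u l2 + c) * h2a
  have hb0 : Qf 1 < Qf 0 + Mf 1 := by
    have eQ0 : Qf 0 = 1 := by simp only [hQf, hu0]; ring
    rw [eQ0, eQ1, eM1, h2a]
    have : u l1 ≤ u l2 := by
      have := hmono l1
      simpa [show l1 + 1 = l2 from by omega] using this
    nlinarith
  have hM1pos : 0 ≤ Mf 1 := by
    rw [eM1, h2a]
    nlinarith [hnn l2]
  -- the per-step package for 1 ≤ t ≤ l1
  have hpack : ∀ t'' j : ℕ, t'' + j + 2 = l2 →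
      (Mf (t'' + 2) = 2 * c * Qf (t'' + 1) - Mf (t'' + 1) ∧
       4 * (Qf (t'' + 1) * Qf (t'' + 2)) = 4 * NN - Mf (t'' + 2) ^ 2 ∧
       Qf (t'' + 2) < Qf (t'' + 1) + Mf (t'' + 2) ∧
       0 ≤ Mf (t'' + 2)) := by
    intro t'' j hj
    have e1 : l2 - (t'' + 1) = j + 1 := by omega
    have e2 : l2 - (t'' + 2) = j := by omega
    have e3 : l2 - (t'' + 1) + 1 = j + 2 := by omega
    have e4 : l2 - (t'' + 2) + 1 = j + 1 := by omega
    have e5 : (t'' + 1) - 1 = t'' := by omega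
    have e6 : (t'' + 2) - 1 = t'' + 1 := by omega
    have hI1 : u l2 = u (t'' + 2) * u (j + 1) + u (t'' + 1) * u j := by
      have := haddf (t'' + 1) j
      rw [show t'' + 1 + j + 1 = l2 from by omega] at this
      exact this
    have hI2 : u l1 = u (t'' + 1) * u (j + 1) + u t'' * u j := by
      have := haddf t'' j
      rw [show t'' + j + 1 = l1 from by omega] at this
      exact this
    refine ⟨?_, ?_, ?_, ?_⟩
    · simp only [hMf, hQf, e1, e2, e3, e4, e5, e6]
      linear_combination (s * u (j + 1)) * hu' t'' + (s * u (t'' + 1)) * hu' j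
    · simp only [hMf, hQf, e1, e2, e4, e6]
      rw [h4N, hI1, hI2, hu' t'']
      ring
    · simp only [hMf, hQf, e1, e2, e4, e6]
      nlinarith [mul_nonneg (mul_nonneg hs0 (add_nonneg (hnn (t'' + 1)) (hnn (t'' + 2))))
        (sub_nonneg.mpr (hmono j)), hc1]
    · simp only [hMf, e2, e4, e6]
      nlinarith [mul_le_mul (hmono (t'' + 1)) (hmono j) (hnn j) (hnn (t'' + 2)), hs0, hc1]
  -- the orbit
  set X : ℕ → ℝ := fun i => if i = 0 then Real.sqrt (NN : ℝ)
      else (Real.sqrt (NN : ℝ) + (Mf ((i - 1) % l2 + 1) : ℝ) / 2) / (Qf ((i - 1) % l2 + 1) : ℝ)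
    with hX
  set b : ℕ → ℤ := fun i => if i = 0 then a else if (i - 1) % l2 < l1 then c else 2 * a
    with hb
  have hX0 : X 0 = Real.sqrt (NN : ℝ) := by simp [hX]
  have hXs : ∀ i : ℕ, X (i + 1) =
      (Real.sqrt (NN : ℝ) + (Mf (i % l2 + 1) : ℝ) / 2) / (Qf (i % l2 + 1) : ℝ) := by
    intro i; simp [hX]
  have main : ∀ i, ((b i : ℝ) < X i ∧ X i < b i + 1) ∧ (X i - b i)⁻¹ = X (i + 1) := by
    intro i
    cases i with
    | zero =>
      have step := cf_step NN 0 1 (Mf 1) (Qf 1) a (by norm_num) (hQpos 1) hM1pos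
        (by rw [eM1]; ring)
        (by have := hqq0; have eQ0 : Qf 0 = 1 := by simp only [hQf, hu0]; ring
            rw [eQ0] at this; linarith)
        (by have eQ0 : Qf 0 = 1 := by simp only [hQf, hu0]; ring
            rw [eQ0] at hb0; exact hb0)
      have e : (Real.sqrt (NN:ℝ) + ((0:ℤ):ℝ) / 2) / ((1:ℤ):ℝ) = Real.sqrt (NN:ℝ) := by
        norm_num
      rw [e] at step
      have eb : b 0 = a := by simp [hb]
      have eX1 : X 1 = (Real.sqrt (NN : ℝ) + (Mf 1 : ℝ) / 2) / (Qf 1 : ℝ) := by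
        rw [hXs 0, Nat.zero_mod]
      rw [hX0, eb, eX1]
      exact ⟨step.1, step.2⟩
    | succ j =>
      have hjlt : j % l2 < l2 := Nat.mod_lt _ (by omega)
      by_cases hw : j % l2 < l1
      · -- non-wrap step, quotient c
        set t := j % l2 + 1 with ht
        have hmod : (j + 1) % l2 = t := by
          rw [Nat.add_mod, Nat.mod_eq_of_lt (show 1 < l2 from by omega)]
          exact Nat.mod_eq_of_lt (by omega)
        obtain ⟨t'', ht''⟩ : ∃ t'', t = t'' + 1 := ⟨t - 1, by omega⟩
        have hpk := hpack t'' (l2 - t'' - 2) (by omega)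
        have step := cf_step NN (Mf (t'' + 1)) (Qf (t'' + 1)) (Mf (t'' + 2)) (Qf (t'' + 2)) c
          (hQpos _) (hQpos _) hpk.2.2.2 hpk.1 hpk.2.1 hpk.2.2.1
        have eb : b (j + 1) = c := by simp [hb, hw]
        have eXj : X (j + 1) = (Real.sqrt (NN : ℝ) + (Mf (t'' + 1) : ℝ) / 2) / (Qf (t'' + 1) : ℝ) := by
          rw [hXs j, ← ht, ht'']
        have eXj1 : X (j + 2) = (Real.sqrt (NN : ℝ) + (Mf (t'' + 2) : ℝ) / 2) / (Qf (t'' + 2) : ℝ) := by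
          rw [hXs (j + 1), hmod, ht'']
        rw [eb, eXj, eXj1]
        exact ⟨step.1, step.2⟩
      · -- wrap step, quotient 2a
        have hjl : j % l2 = l1 := by omega
        have hmod : (j + 1) % l2 = 0 := by
          rw [Nat.add_mod, Nat.mod_eq_of_lt (show 1 < l2 from by omega), hjl]
          simp [show l1 + 1 = l2 from by omega]
        have step := cf_step NN (Mf l2) (Qf l2) (Mf 1) (Qf 1) (2 * a)
          (by rw [eQl2]; norm_num) (hQpos 1) hM1pos
          (by rw [eM1, eMl2, eQl2]; ring)
          (by have eQ0 : Qf 0 = 1 := by simp only [hQf, hu0]; ring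
              rw [eQl2]
              rw [eQ0] at hqq0; linarith)
          (by have eQ0 : Qf 0 = 1 := by simp only [hQf, hu0]; ring
              rw [eQl2]; rw [eQ0] at hb0; exact hb0)
        have eb : b (j + 1) = 2 * a := by simp [hb, hjl]
        have eXj : X (j + 1) = (Real.sqrt (NN : ℝ) + (Mf l2 : ℝ) / 2) / (Qf l2 : ℝ) := by
          rw [hXs j, hjl, show l1 + 1 = l2 from by omega]
        have eXj1 : X (j + 2) = (Real.sqrt (NN : ℝ) + (Mf 1 : ℝ) / 2) / (Qf 1 : ℝ) := by
          rw [hXs (j + 1), hmod]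
        rw [eb, eXj, eXj1]
        exact ⟨step.1, step.2⟩
  have hfl : ∀ i, ((b i : ℝ) < X i ∧ X i < b i + 1) := fun i => (main i).1
  have hstep : ∀ i, X (i + 1) = (X i - b i)⁻¹ := fun i => ((main i).2).symm
  constructor
  · have h0 := hfl 0
    rw [hX0] at h0
    have eb : b 0 = a := by simp [hb]
    rw [eb] at h0
    exact Int.floor_eq_iff.mpr ⟨h0.1.le, h0.2⟩
  · intro i
    have horb := orbit_s_get i X b hfl hstep
    rw [hX0] at horb
    have : (GenContFract.of (Real.sqrt (NN : ℝ))).partDens.get? i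
        = some ((b (i + 1) : ℝ)) := by
      simp only [GenContFract.partDens, Stream'.Seq.map_get?, horb, Option.map_some]
    rw [this]
    congr 1
    have eb : b (i + 1) = if i % l2 < l1 then c else 2 * a := by
      simp only [hb, if_neg (Nat.succ_ne_zero i), Nat.add_sub_cancel]
    rw [eb, getD_rep_append l1 (i % l2) c (2 * a) 0 (by
      have := Nat.mod_lt i (show 0 < l2 from by omega); omega)]
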